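/- The infinite three-color Tantrix rotation puzzle problem Inf-3-TRP is undecidable: there is no computable function d : ℕ → Bool such that for every e ∈ ℕ for which the e-th partial computable function is total and computes (under the fixed encodings) a function 𝒜 : ℤ² → Option T_3, d(e) = true holds if and only if the rotation puzzle 𝒜 has a solution. -/

import Mathlib

/-- The Tantrix colors used in the tile set. -/
inductive Color where
  | red
  | yellow
  | blue
deriving DecidableEq

/-- A tile is its clockwise color sequence: a word of length 6 over the colors,
edges indexed `0, …, 5` clockwise. -/
abbrev Tile := Fin 6 → Color

/-- Cyclic rotation of a tile by `k` steps: edge `i` of the rotated tile carries the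
color of edge `i + k` of the original sequence.  Two solutions are compared as the
assigned rotated color sequences. -/
def rotTile (k : Fin 6) (t : Tile) : Tile := fun i => t (i + k)

open Color in
/-- The tile set T3: the color sequences yrrbby, ryybbr, yrrybb, ryyrbb, brrbyy, yrbybr, rbyryb, brybyr, brbyyr, bybrry, ryrbby, rbryyb, ybyrrb, yrybbr. -/
def T3 : Set Tile :=
  { ![yellow,red,red,blue,blue,yellow],
    ![red,yellow,yellow,blue,blue,red],
    ![yellow,red,red,yellow,blue,blue],
    ![red,yellow,yellow,red,blue,blue],
    ![blue,red,red,blue,yellow,yellow],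
    ![yellow,red,blue,yellow,blue,red],
    ![red,blue,yellow,red,yellow,blue],
    ![blue,red,yellow,blue,yellow,red],
    ![blue,red,blue,yellow,yellow,red],
    ![blue,yellow,blue,red,red,yellow],
    ![red,yellow,red,blue,blue,yellow],
    ![red,blue,red,yellow,yellow,blue],
    ![yellow,blue,yellow,red,red,blue],
    ![yellow,red,yellow,blue,blue,red] }

/-- The six neighbor offsets of the hexagonal layout of `ℤ²`, listed clockwise
starting from straight up; edge `i` of a tile at `x` is the edge shared with the
neighboring point `x + dirs i`, and opposite directions differ by `3` (mod 6).
Two points are neighbors exactly if their difference is one of these offsets. -/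
def dirs : Fin 6 → ℤ × ℤ := ![(0,1), (1,1), (1,0), (0,-1), (-1,-1), (-1,0)]

/-- An explicit numeric code for a color. -/
def Color.toNat : Color → ℕ
  | .red => 0
  | .yellow => 1
  | .blue => 2

/-- An explicit encoding of tiles into `ℕ`. -/
def encTile (t : Tile) : ℕ :=
  ∑ i : Fin 6, (t i).toNat * 3 ^ (i : ℕ)


/-- Tiles belonging to the tile set `T3`. -/
abbrev SetTile := {t : Tile // t ∈ T3}

/-- An explicit encoding of `Option SetTile` into `ℕ`. -/
def encOptTile : Option SetTile → ℕ
  | none => 0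
  | some t => encTile t.1 + 1

/-- `sol` is a solution of the (possibly infinite) rotation-puzzle instance
`A : ℤ × ℤ → Option SetTile`: it assigns to each occupied point a cyclic rotation
of the tile placed there, such that for every pair of neighboring occupied points
the two assigned sequences give the same color to their joint edge (edge `d` of
the tile at `x` is glued to edge `d + 3` of the tile at `x + dirs d`). -/
def InfSolution (A : ℤ × ℤ → Option SetTile) (sol : ℤ × ℤ → Option Tile) : Prop :=
  (∀ x, (A x = none → sol x = none) ∧
    (∀ t : SetTile, A x = some t → ∃ k : Fin 6, sol x = some (rotTile k t.1))) ∧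
  (∀ (x : ℤ × ℤ) (d : Fin 6) (s s' : Tile),
    sol x = some s → sol (x + dirs d) = some s' → s d = s' (d + 3))


namespace InfTRPaux
open Color Nat.Partrec Nat.Partrec.Code

def tA : Tile := ![yellow,red,red,blue,blue,yellow]
def tB : Tile := ![yellow,red,red,yellow,blue,blue]
def tC : Tile := ![red,yellow,yellow,red,blue,blue]
def tD : Tile := ![blue,red,red,blue,yellow,yellow]

lemma tA_mem : tA ∈ T3 := by unfold T3; exact Set.mem_insert _ _
lemma tB_mem : tB ∈ T3 := by
  unfold T3
  exact Set.mem_insert_of_mem _ (Set.mem_insert_of_mem _ (Set.mem_insert _ _))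
lemma tC_mem : tC ∈ T3 := by
  unfold T3
  exact Set.mem_insert_of_mem _ (Set.mem_insert_of_mem _ (Set.mem_insert_of_mem _
    (Set.mem_insert _ _)))
lemma tD_mem : tD ∈ T3 := by
  unfold T3
  exact Set.mem_insert_of_mem _ (Set.mem_insert_of_mem _ (Set.mem_insert_of_mem _
    (Set.mem_insert_of_mem _ (Set.mem_insert _ _))))

def sA : SetTile := ⟨tA, tA_mem⟩
def sB : SetTile := ⟨tB, tB_mem⟩
def sC : SetTile := ⟨tC, tC_mem⟩
def sD : SetTile := ⟨tD, tD_mem⟩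

set_option maxRecDepth 100000 in
lemma unsolv (ka kb kc kd : Fin 6) :
    ¬(rotTile ka tA 0 = rotTile kb tB 3 ∧ rotTile ka tA 1 = rotTile kc tC 4 ∧
      rotTile ka tA 2 = rotTile kd tD 5 ∧ rotTile kb tB 2 = rotTile kc tC 5 ∧
      rotTile kd tD 0 = rotTile kc tC 3) := by
  revert ka kb kc kd; decide

/-- `c` halts on input `0` within `k` steps. -/
def halts (c : Code) (k : ℕ) : Bool := (evaln k c 0).isSome

/-- The instance associated to code `c`, as a function of the numeric code of the point. -/
def F (c : Code) (n : ℕ) : Option SetTile :=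
  if n.unpair.1 % 20 = 0 ∧ halts c (n.unpair.1 / 20) = true then
    (if n.unpair.2 = 0 then some sA else if n.unpair.2 = 2 then some sB else none)
  else if n.unpair.1 % 20 = 2 ∧ halts c (n.unpair.1 / 20) = true then
    (if n.unpair.2 = 0 then some sD else if n.unpair.2 = 2 then some sC else none)
  else none

/-- The puzzle instance associated to code `c`. -/
def Ac (c : Code) (z : ℤ × ℤ) : Option SetTile := F c (Encodable.encode z)

lemma solvable_of_not_dom {c : Code} (h : ¬(eval c 0).Dom) :
    InfSolution (Ac c) (fun _ => Option.none) := by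
  have hh : ∀ k, halts c k = false := by
    intro k
    by_contra hk
    rw [Bool.not_eq_false, halts, Option.isSome_iff_exists] at hk
    obtain ⟨x, hx⟩ := hk
    exact h (Part.dom_iff_mem.2 ⟨x, evaln_sound hx⟩)
  have hA : ∀ z, Ac c z = Option.none := by
    intro z
    simp [Ac, F, hh]
  constructor
  · intro x
    refine ⟨fun _ => rfl, fun t ht => ?_⟩
    rw [hA x] at ht
    cases ht
  · intro x d s s' hs
    cases hs

lemma encA {k : ℕ} : Encodable.encode ((((10*k : ℕ)) : ℤ), (0:ℤ)) = Nat.pair (2*(10*k)) 0 := rfl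
lemma encB {k : ℕ} : Encodable.encode ((((10*k : ℕ)) : ℤ), (1:ℤ)) = Nat.pair (2*(10*k)) 2 := rfl
lemma encC {k : ℕ} : Encodable.encode ((((10*k+1 : ℕ)) : ℤ), (1:ℤ)) = Nat.pair (2*(10*k+1)) 2 := rfl
lemma encD {k : ℕ} : Encodable.encode ((((10*k+1 : ℕ)) : ℤ), (0:ℤ)) = Nat.pair (2*(10*k+1)) 0 := rfl

lemma not_solvable_of_dom {c : Code} (h : (eval c 0).Dom) :
    ¬ ∃ sol : ℤ × ℤ → Option Tile, InfSolution (Ac c) sol := by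
  rintro ⟨sol, hsol1, hsol2⟩
  obtain ⟨x, hx⟩ := Part.dom_iff_mem.1 h
  obtain ⟨k, hk⟩ := evaln_complete.1 hx
  have hhk : halts c k = true := by
    rw [halts, Option.isSome_iff_exists]; exact ⟨x, hk⟩
  set pa : ℤ × ℤ := ((((10*k : ℕ)) : ℤ), (0:ℤ)) with hpa
  set pb : ℤ × ℤ := ((((10*k : ℕ)) : ℤ), (1:ℤ)) with hpb
  set pc : ℤ × ℤ := ((((10*k+1 : ℕ)) : ℤ), (1:ℤ)) with hpc
  set pd : ℤ × ℤ := ((((10*k+1 : ℕ)) : ℤ), (0:ℤ)) with hpd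
  have e1 : (2*(10*k)) % 20 = 0 := by omega
  have e2 : (2*(10*k)) / 20 = k := by omega
  have e3 : (2*(10*k+1)) % 20 = 2 := by omega
  have e4 : (2*(10*k+1)) / 20 = k := by omega
  have hAa : Ac c pa = some sA := by
    show F c (Encodable.encode pa) = some sA
    rw [hpa, encA]
    simp [F, e1, e2, hhk]
  have hAb : Ac c pb = some sB := by
    show F c (Encodable.encode pb) = some sB
    rw [hpb, encB]
    simp [F, e1, e2, hhk]
  have hAc : Ac c pc = some sC := by
    show F c (Encodable.encode pc) = some sC
    rw [hpc, encC]
    simp [F, e3, e4, hhk]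
  have hAd : Ac c pd = some sD := by
    show F c (Encodable.encode pd) = some sD
    rw [hpd, encD]
    simp [F, e3, e4, hhk]
  obtain ⟨ka, hka⟩ := (hsol1 pa).2 sA hAa
  obtain ⟨kb, hkb⟩ := (hsol1 pb).2 sB hAb
  obtain ⟨kc, hkc⟩ := (hsol1 pc).2 sC hAc
  obtain ⟨kd, hkd⟩ := (hsol1 pd).2 sD hAd
  have eab : pa + dirs 0 = pb := by
    simp [hpa, hpb, dirs, Prod.ext_iff]
  have eac : pa + dirs 1 = pc := by
    simp [hpa, hpc, dirs, Prod.ext_iff]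
  have ead : pa + dirs 2 = pd := by
    simp [hpa, hpd, dirs, Prod.ext_iff]
  have ebc : pb + dirs 2 = pc := by
    simp [hpb, hpc, dirs, Prod.ext_iff]
  have edc : pd + dirs 0 = pc := by
    simp [hpd, hpc, dirs, Prod.ext_iff]
  have c0 := hsol2 pa 0 _ _ hka (by rw [eab]; exact hkb)
  have c1 := hsol2 pa 1 _ _ hka (by rw [eac]; exact hkc)
  have c2 := hsol2 pa 2 _ _ hka (by rw [ead]; exact hkd)
  have c3 := hsol2 pb 2 _ _ hkb (by rw [ebc]; exact hkc)
  have c4 := hsol2 pd 0 _ _ hkd (by rw [edc]; exact hkc)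
  exact unsolv ka kb kc kd ⟨c0, c1, c2, c3, c4⟩

lemma F_primrec : Primrec fun p : Code × ℕ => encOptTile (F p.1 p.2) := by
  have ha : Primrec fun p : Code × ℕ => p.2.unpair.1 :=
    Primrec.fst.comp (Primrec.unpair.comp Primrec.snd)
  have hb : Primrec fun p : Code × ℕ => p.2.unpair.2 :=
    Primrec.snd.comp (Primrec.unpair.comp Primrec.snd)
  have hhalts : Primrec fun p : Code × ℕ => halts p.1 (p.2.unpair.1 / 20) :=
    Primrec.option_isSome.comp (primrec_evaln.comp
      (((Primrec.nat_div.comp ha (Primrec.const 20)).pair Primrec.fst).pair (Primrec.const 0)))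
  have hc1 : PrimrecPred fun p : Code × ℕ =>
      p.2.unpair.1 % 20 = 0 ∧ halts p.1 (p.2.unpair.1 / 20) = true :=
    PrimrecPred.and
      (Primrec.eq.comp (Primrec.nat_mod.comp ha (Primrec.const 20)) (Primrec.const 0))
      (Primrec.eq.comp hhalts (Primrec.const true))
  have hc2 : PrimrecPred fun p : Code × ℕ =>
      p.2.unpair.1 % 20 = 2 ∧ halts p.1 (p.2.unpair.1 / 20) = true :=
    PrimrecPred.and
      (Primrec.eq.comp (Primrec.nat_mod.comp ha (Primrec.const 20)) (Primrec.const 2))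
      (Primrec.eq.comp hhalts (Primrec.const true))
  have hb0 : PrimrecPred fun p : Code × ℕ => p.2.unpair.2 = 0 :=
    Primrec.eq.comp hb (Primrec.const 0)
  have hb2 : PrimrecPred fun p : Code × ℕ => p.2.unpair.2 = 2 :=
    Primrec.eq.comp hb (Primrec.const 2)
  exact (Primrec.ite hc1
      (Primrec.ite hb0 (Primrec.const (encOptTile (some sA)))
        (Primrec.ite hb2 (Primrec.const (encOptTile (some sB)))
          (Primrec.const (encOptTile none))))
      (Primrec.ite hc2
        (Primrec.ite hb0 (Primrec.const (encOptTile (some sD)))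
          (Primrec.ite hb2 (Primrec.const (encOptTile (some sC)))
            (Primrec.const (encOptTile none))))
        (Primrec.const (encOptTile none)))).of_eq fun p => by
    simp only [F, apply_ite encOptTile]

/-- The total numeric function implementing all the instances at once. -/
def g (m : ℕ) : ℕ :=
  encOptTile (F (Denumerable.ofNat Code m.unpair.1) m.unpair.2)

set_option maxHeartbeats 1000000 in
lemma g_primrec : Primrec g :=
  F_primrec.comp
    (((Primrec.ofNat Code).comp (Primrec.fst.comp Primrec.unpair)).pair
      (Primrec.snd.comp Primrec.unpair))

end InfTRPaux

open InfTRPaux Nat.Partrec Nat.Partrec.Code in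
/-- the infinite three-color Tantrix rotation puzzle problem
`Inf-3-TRP` is undecidable: there is no computable `d : ℕ → Bool` such that whenever
the `e`-th partial computable function (in the standard enumeration by
`Nat.Partrec.Code`) is total and computes, under the fixed encodings, a function
`A : ℤ × ℤ → Option SetTile`, then `d e = true` holds iff the rotation puzzle `A` has a
solution. -/
theorem inf_trp_undecidable :
    ¬ ∃ d : ℕ → Bool, Computable d ∧
      ∀ (e : ℕ) (A : ℤ × ℤ → Option SetTile),
        (∀ m : ℕ, ((Denumerable.ofNat Nat.Partrec.Code e).eval m).Dom) →
        (∀ x : ℤ × ℤ,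
          (Denumerable.ofNat Nat.Partrec.Code e).eval (Encodable.encode x) =
            Part.some (encOptTile (A x))) →
        (d e = true ↔ ∃ sol : ℤ × ℤ → Option Tile, InfSolution A sol) := by
  rintro ⟨d, hd, H⟩
  have hNP : Nat.Partrec fun m => Part.some (g m) :=
    (Partrec.nat_iff.1 g_primrec.to_comp).of_eq fun n => rfl
  obtain ⟨c₀, hc₀⟩ := exists_code.1 hNP
  obtain ⟨sm, hsm_comp, hsm⟩ := smn
  set E : Code → ℕ := fun c => Encodable.encode (sm c₀ (Encodable.encode c)) with hE
  have hEcomp : Computable E :=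
    Computable.encode.comp (hsm_comp.comp (Computable.const c₀) Computable.encode)
  have keyeval : ∀ (c : Code) (x : ℕ),
      (Denumerable.ofNat Code (E c)).eval x = Part.some (encOptTile (F c x)) := by
    intro c x
    rw [hE]
    simp only [Denumerable.ofNat_encode]
    rw [hsm, hc₀]
    simp [g, Nat.unpair_pair, Denumerable.ofNat_encode]
  have hiff : ∀ c : Code, d (E c) = true ↔ ∃ sol : ℤ × ℤ → Option Tile, InfSolution (Ac c) sol := by
    intro c
    refine H (E c) (Ac c) (fun m => ?_) (fun x => ?_)
    · rw [keyeval]; trivial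
    · rw [keyeval]; rfl
  have hcp : ComputablePred fun c : Code => ¬(eval c 0).Dom := by
    rw [ComputablePred.computable_iff]
    refine ⟨fun c => d (E c), hd.comp hEcomp, funext fun c => propext ?_⟩
    constructor
    · intro hnd
      exact (hiff c).2 ⟨_, solvable_of_not_dom hnd⟩
    · intro hdc hdom
      exact not_solvable_of_dom hdom ((hiff c).1 hdc)
  exact ComputablePred.halting_problem 0 (hcp.not.of_eq fun c => not_not)
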